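/- arXiv:2006.15143 — 2 statements merged into one kernel-verified Lean document; each statement's English description precedes it below -/
import Mathlib

section
/- Let f : ℝ → ℝ and u : ℝ → ℝ be of class C⁴ and fix x ∈ ℝ. For the QUICK scheme (κ = 1/2), the central flux balance approximates the cell-averaged convection operator to third order: (1/(2h))·(f(uL(u,h)) + f(uR(u,h)) − f(uL⁻(u,h)) − f(uR⁻(u,h))) − (1/h)·∫_{x−h/2}^{x+h/2} (f∘u)'(ξ) dξ = O(h³) as h → 0⁺. That is, the QUICK scheme is a third-order finite-volume discretization of the integral form of a general nonlinear conservation law with point-valued solutions. -/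
open Asymptotics Filter Set MeasureTheory

noncomputable def uL (κ x : ℝ) (v : ℝ → ℝ) (h : ℝ) : ℝ :=
  (v x + v (x + h)) / 2 - ((1 - κ) / 4) * (v (x + h) - 2 * v x + v (x - h))

noncomputable def uR (κ x : ℝ) (v : ℝ → ℝ) (h : ℝ) : ℝ :=
  (v (x + h) + v x) / 2 - ((1 - κ) / 4) * (v (x + 2 * h) - 2 * v (x + h) + v x)

/-- Left-face interpolated value from the left: same formula with `x` replaced by `x - h`. -/
noncomputable def uLm (κ x : ℝ) (v : ℝ → ℝ) (h : ℝ) : ℝ := uL κ (x - h) v h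

/-- Left-face interpolated value from the right: same formula with `x` replaced by `x - h`. -/
noncomputable def uRm (κ x : ℝ) (v : ℝ → ℝ) (h : ℝ) : ℝ := uR κ (x - h) v h

lemma isBigO_succ_of_deriv {ψ : ℝ → ℝ} {k : ℕ}
    (hdiff : Differentiable ℝ ψ) (h0 : ψ 0 = 0)
    (hd : deriv ψ =O[nhds (0:ℝ)] fun t => t ^ k) :
    ψ =O[nhds (0:ℝ)] fun t => t ^ (k+1) := by
  obtain ⟨C, hC⟩ := hd.bound
  rw [Metric.eventually_nhds_iff] at hC
  obtain ⟨ε, hε, hball⟩ := hC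
  rw [Asymptotics.isBigO_iff]
  refine ⟨|C|, Metric.eventually_nhds_iff.2 ⟨ε, hε, fun t ht => ?_⟩⟩
  have habs : ∀ ξ ∈ Set.uIcc (0:ℝ) t, |ξ| ≤ |t| := by
    intro ξ hξ
    rcases Set.mem_uIcc.1 hξ with ⟨h1, h2⟩ | ⟨h1, h2⟩ <;> rw [abs_le] <;>
      constructor <;> cases abs_cases t <;> linarith [abs_nonneg t, le_abs_self t,
        neg_abs_le t]
  have key : ‖ψ t - ψ 0‖ ≤ (|C| * |t|^k) * ‖t - 0‖ := by
    apply Convex.norm_image_sub_le_of_norm_deriv_le (fun ξ _ => hdiff ξ)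
      (fun ξ hξ => ?_) (convex_uIcc _ _) Set.left_mem_uIcc Set.right_mem_uIcc
    have hd1 : dist ξ 0 < ε := by
      rw [Real.dist_eq, sub_zero]
      calc |ξ| ≤ |t| := habs ξ hξ
        _ < ε := by simpa [Real.dist_eq] using ht
    calc ‖deriv ψ ξ‖ ≤ C * ‖ξ ^ k‖ := hball hd1
      _ ≤ |C| * |t|^k := by
          rw [Real.norm_eq_abs, abs_pow]
          have h1 : C * |ξ|^k ≤ |C| * |ξ|^k :=
            mul_le_mul_of_nonneg_right (le_abs_self C) (by positivity)
          have h2 : |C| * |ξ|^k ≤ |C| * |t|^k :=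
            mul_le_mul_of_nonneg_left (pow_le_pow_left₀ (abs_nonneg _) (habs ξ hξ) k)
              (abs_nonneg C)
          linarith
  rw [h0, sub_zero, sub_zero] at key
  calc ‖ψ t‖ ≤ (|C| * |t|^k) * ‖t‖ := key
    _ = |C| * ‖t ^ (k+1)‖ := by
        rw [Real.norm_eq_abs, Real.norm_eq_abs, abs_pow, pow_succ]; ring

lemma taylor4_isBigO {φ : ℝ → ℝ} (hφ : ContDiff ℝ 4 φ) (a : ℝ) :
    (fun t => φ (a + t) - (φ a + deriv φ a * t + iteratedDeriv 2 φ a * t^2/2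
        + iteratedDeriv 3 φ a * t^3/6)) =O[nhds (0:ℝ)] fun t => t ^ 4 := by
  have dk : ∀ k : ℕ, k < 4 → Differentiable ℝ (iteratedDeriv k φ) := by
    intro k hk
    exact hφ.differentiable_iteratedDeriv k (by exact_mod_cast hk)
  have key : ∀ (k : ℕ), k < 4 → ∀ t : ℝ,
      HasDerivAt (fun s => iteratedDeriv k φ (a + s)) (iteratedDeriv (k+1) φ (a + t)) t := by
    intro k hk t
    have h1 : HasDerivAt (fun s : ℝ => a + s) 1 t := by
      simpa using (hasDerivAt_id t).const_add a
    have h2 : HasDerivAt (iteratedDeriv k φ) (iteratedDeriv (k+1) φ (a+t)) (a+t) := by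
      have h3 := ((dk k hk) (a+t)).hasDerivAt
      rwa [← iteratedDeriv_succ] at h3
    have h4 := h2.comp t h1
    rw [mul_one] at h4
    exact h4
  have c4 : Continuous (iteratedDeriv 4 φ) := hφ.continuous_iteratedDeriv 4 (by norm_num)
  -- level 3
  have h3 : (fun t => iteratedDeriv 3 φ (a+t) - iteratedDeriv 3 φ a)
      =O[nhds (0:ℝ)] fun t => t ^ 1 := by
    apply isBigO_succ_of_deriv (k := 0)
    · exact fun t => ((key 3 (by norm_num) t).sub_const _).differentiableAt
    · simp
    · have hder : deriv (fun t => iteratedDeriv 3 φ (a+t) - iteratedDeriv 3 φ a)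
          = fun t => iteratedDeriv 4 φ (a+t) := by
        funext t; exact ((key 3 (by norm_num) t).sub_const _).deriv
      rw [hder]
      have : Filter.Tendsto (fun t : ℝ => iteratedDeriv 4 φ (a+t)) (nhds 0)
          (nhds (iteratedDeriv 4 φ (a+0))) :=
        (c4.comp (continuous_const.add continuous_id)).tendsto 0
      simpa [pow_zero] using this.isBigO_one ℝ
  -- level 2
  have h2 : (fun t => iteratedDeriv 2 φ (a+t)
      - (iteratedDeriv 2 φ a + iteratedDeriv 3 φ a * t)) =O[nhds (0:ℝ)] fun t => t ^ 2 := by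
    apply isBigO_succ_of_deriv (k := 1)
    · intro t
      exact ((key 2 (by norm_num) t).sub
        (((hasDerivAt_id t).const_mul _).const_add _)).differentiableAt
    · simp
    · have hder : deriv (fun t => iteratedDeriv 2 φ (a+t)
          - (iteratedDeriv 2 φ a + iteratedDeriv 3 φ a * t))
          = fun t => iteratedDeriv 3 φ (a+t) - iteratedDeriv 3 φ a := by
        funext t
        have := (key 2 (by norm_num) t).sub
          (((hasDerivAt_id t).const_mul (iteratedDeriv 3 φ a)).const_add (iteratedDeriv 2 φ a))
        refine this.deriv.trans ?_
        simp
      rw [hder]; exact h3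
  -- level 1
  have h1 : (fun t => deriv φ (a+t)
      - (deriv φ a + iteratedDeriv 2 φ a * t + iteratedDeriv 3 φ a * t^2/2))
      =O[nhds (0:ℝ)] fun t => t ^ 3 := by
    apply isBigO_succ_of_deriv (k := 2)
    · intro t
      have hp : HasDerivAt (fun s : ℝ => deriv φ a + iteratedDeriv 2 φ a * s
          + iteratedDeriv 3 φ a * s^2/2)
          (iteratedDeriv 2 φ a + iteratedDeriv 3 φ a * t) t := by
        have := (((hasDerivAt_pow 2 t).const_mul (iteratedDeriv 3 φ a)).div_const 2).const_add
          (deriv φ a + iteratedDeriv 2 φ a * t)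
        have h2' := (((hasDerivAt_id t).const_mul (iteratedDeriv 2 φ a)).const_add (deriv φ a)).add
          (((hasDerivAt_pow 2 t).const_mul (iteratedDeriv 3 φ a)).div_const 2)
        exact h2'.congr_deriv (by push_cast; ring)
      have hφ1 : HasDerivAt (fun s => deriv φ (a+s)) (iteratedDeriv 2 φ (a+t)) t := by
        have := key 1 (by norm_num) t
        simpa [iteratedDeriv_one] using this
      exact (hφ1.sub hp).differentiableAt
    · simp
    · have hder : deriv (fun t => deriv φ (a+t)
          - (deriv φ a + iteratedDeriv 2 φ a * t + iteratedDeriv 3 φ a * t^2/2))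
          = fun t => iteratedDeriv 2 φ (a+t) - (iteratedDeriv 2 φ a + iteratedDeriv 3 φ a * t) := by
        funext t
        have hp : HasDerivAt (fun s : ℝ => deriv φ a + iteratedDeriv 2 φ a * s
            + iteratedDeriv 3 φ a * s^2/2)
            (iteratedDeriv 2 φ a + iteratedDeriv 3 φ a * t) t := by
          have h2' := (((hasDerivAt_id t).const_mul (iteratedDeriv 2 φ a)).const_add (deriv φ a)).add
            (((hasDerivAt_pow 2 t).const_mul (iteratedDeriv 3 φ a)).div_const 2)
          exact h2'.congr_deriv (by push_cast; ring)
        have hφ1 : HasDerivAt (fun s => deriv φ (a+s)) (iteratedDeriv 2 φ (a+t)) t := by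
          have := key 1 (by norm_num) t
          simpa [iteratedDeriv_one] using this
        exact (hφ1.sub hp).deriv
      rw [hder]; exact h2
  -- level 0
  apply isBigO_succ_of_deriv (k := 3)
  · intro t
    have hp : HasDerivAt (fun s : ℝ => φ a + deriv φ a * s + iteratedDeriv 2 φ a * s^2/2
        + iteratedDeriv 3 φ a * s^3/6)
        (deriv φ a + iteratedDeriv 2 φ a * t + iteratedDeriv 3 φ a * t^2/2) t := by
      have h2' := ((((hasDerivAt_id t).const_mul (deriv φ a)).const_add (φ a)).add
        (((hasDerivAt_pow 2 t).const_mul (iteratedDeriv 2 φ a)).div_const 2)).add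
        (((hasDerivAt_pow 3 t).const_mul (iteratedDeriv 3 φ a)).div_const 6)
      exact h2'.congr_deriv (by push_cast; ring)
    have hφ0 : HasDerivAt (fun s => φ (a+s)) (deriv φ (a+t)) t := by
      have := key 0 (by norm_num) t
      simpa [iteratedDeriv_one] using this
    exact (hφ0.sub hp).differentiableAt
  · simp
  · have hder : deriv (fun t => φ (a+t) - (φ a + deriv φ a * t + iteratedDeriv 2 φ a * t^2/2
        + iteratedDeriv 3 φ a * t^3/6))
        = fun t => deriv φ (a+t)
          - (deriv φ a + iteratedDeriv 2 φ a * t + iteratedDeriv 3 φ a * t^2/2) := by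
      funext t
      have hp : HasDerivAt (fun s : ℝ => φ a + deriv φ a * s + iteratedDeriv 2 φ a * s^2/2
          + iteratedDeriv 3 φ a * s^3/6)
          (deriv φ a + iteratedDeriv 2 φ a * t + iteratedDeriv 3 φ a * t^2/2) t := by
        have h2' := ((((hasDerivAt_id t).const_mul (deriv φ a)).const_add (φ a)).add
          (((hasDerivAt_pow 2 t).const_mul (iteratedDeriv 2 φ a)).div_const 2)).add
          (((hasDerivAt_pow 3 t).const_mul (iteratedDeriv 3 φ a)).div_const 6)
        exact h2'.congr_deriv (by push_cast; ring)
      have hφ0 : HasDerivAt (fun s => φ (a+s)) (deriv φ (a+t)) t := by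
        have := key 0 (by norm_num) t
        simpa [iteratedDeriv_one] using this
      exact (hφ0.sub hp).deriv
    rw [hder]; exact h1


lemma pow_isBigO_pow {m n : ℕ} (hmn : n ≤ m) :
    (fun h : ℝ => h ^ m) =O[nhds (0:ℝ)] fun h => h ^ n := by
  have heq : (fun h : ℝ => h ^ m) = fun h => h ^ n * h ^ (m - n) := by
    funext h; rw [← pow_add]; congr 1; omega
  rw [heq]
  have h1 : (fun h : ℝ => h ^ (m - n)) =O[nhds (0:ℝ)] (fun _ => (1:ℝ)) :=
    ((continuous_pow (m-n)).tendsto 0).isBigO_one ℝ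
  simpa using (isBigO_refl (fun h : ℝ => h ^ n) (nhds 0)).mul h1

lemma key_comp (f : ℝ → ℝ) (u0 f1 f2 f3 : ℝ)
    (hB : (fun s : ℝ => f (u0 + s) - (f u0 + f1*s + f2*s^2/2 + f3*s^3/6))
      =O[nhds (0:ℝ)] fun s => s^4)
    (A Q : ℝ → ℝ)
    (hAQ : (fun h => A h - Q h) =O[nhds (0:ℝ)] fun h => h^4)
    (hA0 : (fun h => A h - u0) =O[nhds (0:ℝ)] fun h => h) :
    (fun h => f (A h) - (f u0 + f1*(Q h - u0) + f2*(Q h - u0)^2/2 + f3*(Q h - u0)^3/6))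
      =O[nhds (0:ℝ)] fun h => h^4 := by
  have hidt : Filter.Tendsto (fun h : ℝ => h) (nhds 0) (nhds 0) := tendsto_id
  have tendA : Filter.Tendsto (fun h => A h - u0) (nhds (0:ℝ)) (nhds 0) :=
    hA0.trans_tendsto hidt
  have hAQ1 : (fun h => A h - Q h) =O[nhds (0:ℝ)] fun h => h := by
    simpa using hAQ.trans (pow_isBigO_pow (show 1 ≤ 4 by norm_num))
  have hQ0 : (fun h => Q h - u0) =O[nhds (0:ℝ)] fun h => h :=
    (hA0.sub hAQ1).congr_left (fun h => by ring)
  have tendQ : Filter.Tendsto (fun h => Q h - u0) (nhds (0:ℝ)) (nhds 0) :=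
    hQ0.trans_tendsto hidt
  have E1 : (fun h => f (A h)
      - (f u0 + f1*(A h - u0) + f2*(A h - u0)^2/2 + f3*(A h - u0)^3/6))
      =O[nhds (0:ℝ)] fun h => (A h - u0)^4 := by
    have := hB.comp_tendsto tendA
    simpa [Function.comp_def] using this
  have E1' : (fun h => f (A h)
      - (f u0 + f1*(A h - u0) + f2*(A h - u0)^2/2 + f3*(A h - u0)^3/6))
      =O[nhds (0:ℝ)] fun h => h^4 := E1.trans (hA0.pow 4)
  -- the polynomial difference
  have o1 : (fun h => A h - u0) =O[nhds (0:ℝ)] (fun _ => (1:ℝ)) := tendA.isBigO_one ℝ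
  have o2 : (fun h => Q h - u0) =O[nhds (0:ℝ)] (fun _ => (1:ℝ)) := tendQ.isBigO_one ℝ
  have hT1 : (fun h => f1 + f2/2*((A h - u0)+(Q h - u0))
      + f3/6*((A h - u0)^2+(A h - u0)*(Q h - u0)+(Q h - u0)^2))
      =O[nhds (0:ℝ)] (fun _ => (1:ℝ)) := by
    have c1 : (fun _ : ℝ => f1) =O[nhds (0:ℝ)] (fun _ => (1:ℝ)) :=
      isBigO_const_const f1 one_ne_zero _
    have sq1 : (fun h => (A h - u0)^2) =O[nhds (0:ℝ)] (fun _ => (1:ℝ)) := by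
      simpa [sq] using o1.mul o1
    have sq2 : (fun h => (Q h - u0)^2) =O[nhds (0:ℝ)] (fun _ => (1:ℝ)) := by
      simpa [sq] using o2.mul o2
    have cr : (fun h => (A h - u0)*(Q h - u0)) =O[nhds (0:ℝ)] (fun _ => (1:ℝ)) := by
      simpa using o1.mul o2
    exact (c1.add (((o1.add o2).const_mul_left (f2/2)))).add
      (((sq1.add cr).add sq2).const_mul_left (f3/6))
  have E2 : (fun h => (f1*(A h - u0) + f2*(A h - u0)^2/2 + f3*(A h - u0)^3/6)
      - (f1*(Q h - u0) + f2*(Q h - u0)^2/2 + f3*(Q h - u0)^3/6))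
      =O[nhds (0:ℝ)] fun h => h^4 := by
    have h2 : (fun h => (A h - Q h) * (f1 + f2/2*((A h - u0)+(Q h - u0))
        + f3/6*((A h - u0)^2+(A h - u0)*(Q h - u0)+(Q h - u0)^2)))
        =O[nhds (0:ℝ)] fun h => h^4 := by simpa using hAQ.mul hT1
    exact h2.congr_left (fun h => by ring)
  exact (E1'.add E2).congr_left (fun h => by ring)


set_option maxHeartbeats 2000000 in
lemma hN_aux (f u : ℝ → ℝ) (x : ℝ) (u0 u1 u2 u3 g1 g2 g3 : ℝ)
    (hu0 : u x = u0) (hud : Differentiable ℝ u)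
    (hA : (fun t : ℝ => u (x + t) - (u0 + u1*t + u2*t^2/2 + u3*t^3/6))
      =O[nhds (0:ℝ)] fun t => t^4)
    (hB : (fun s : ℝ => f (u0 + s) - (f u0 + g1*s + g2*s^2/2 + g3*s^3/6))
      =O[nhds (0:ℝ)] fun s => s^4) :
    (fun h : ℝ => (f (uL (1/2) x u h) + f (uR (1/2) x u h)
        - f (uLm (1/2) x u h) - f (uRm (1/2) x u h))
      - 2*(f (u (x + h/2)) - f (u (x - h/2)))) =O[nhds (0:ℝ)] fun h => h^4 := by
  set P := fun t : ℝ => u0 + u1*t + u2*t^2/2 + u3*t^3/6 with hP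
  set Q1 := fun h : ℝ => (u0 + P h)/2 - (1/8)*(P h - 2*u0 + P (-h)) with hQ1
  set Q2 := fun h : ℝ => (P h + u0)/2 - (1/8)*(P (2*h) - 2*P h + u0) with hQ2
  set Q3 := fun h : ℝ => (P (-h) + u0)/2 - (1/8)*(u0 - 2*P (-h) + P (-(2*h))) with hQ3
  set Q4 := fun h : ℝ => (u0 + P (-h))/2 - (1/8)*(P h - 2*u0 + P (-h)) with hQ4
  set Q5 := fun h : ℝ => P (h/2) with hQ5
  set Q6 := fun h : ℝ => P (-(h/2)) with hQ6
  have he : ∀ c : ℝ, (fun h : ℝ => u (x + c*h) - P (c*h)) =O[nhds (0:ℝ)] fun h => h^4 := by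
    intro c
    have tend : Filter.Tendsto (fun h : ℝ => c*h) (nhds 0) (nhds 0) := by
      have hc : Continuous fun h : ℝ => c*h := by fun_prop
      have := hc.tendsto 0
      simp only [mul_zero] at this
      exact this
    have h1 := hA.comp_tendsto tend
    have h2 : (fun h : ℝ => (c*h)^4) =O[nhds (0:ℝ)] fun h => h^4 := by
      simpa [mul_pow] using (isBigO_refl (fun h : ℝ => h^4) (nhds 0)).const_mul_left (c^4)
    refine IsBigO.trans ?_ h2
    simpa [hP, Function.comp_def] using h1
  have hd : ∀ c : ℝ, (fun h : ℝ => u (x + c*h) - u x) =O[nhds (0:ℝ)] fun h => h := by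
    intro c
    have h1 : (fun y => u y - u x) =O[nhds x] fun y => y - x := (hud x).isBigO_sub
    have tend : Filter.Tendsto (fun h : ℝ => x + c*h) (nhds 0) (nhds x) := by
      have hc : Continuous fun h : ℝ => x + c*h := by fun_prop
      have := hc.tendsto 0
      simp only [mul_zero, add_zero] at this
      exact this
    have h2 := h1.comp_tendsto tend
    have h3 : (fun h : ℝ => (x + c*h) - x) =O[nhds (0:ℝ)] fun h => h := by
      simpa [add_sub_cancel_left] using (isBigO_refl (fun h : ℝ => h) (nhds 0)).const_mul_left c
    have h2' : (fun h : ℝ => u (x + c*h) - u x) =O[nhds (0:ℝ)] fun h => (x + c*h) - x := by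
      simpa [Function.comp_def] using h2
    exact h2'.trans h3
  have e1 : (fun h : ℝ => u (x + h) - P h) =O[nhds (0:ℝ)] fun h => h^4 := by
    refine (he 1).congr_left fun h => ?_
    rw [show (1:ℝ)*h = h from by ring]
  have em1 : (fun h : ℝ => u (x - h) - P (-h)) =O[nhds (0:ℝ)] fun h => h^4 := by
    refine (he (-1)).congr_left fun h => ?_
    rw [show (-1:ℝ)*h = -h from by ring, show x + -h = x - h from by ring]
  have e2 : (fun h : ℝ => u (x + 2*h) - P (2*h)) =O[nhds (0:ℝ)] fun h => h^4 := he 2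
  have em2 : (fun h : ℝ => u (x - 2*h) - P (-(2*h))) =O[nhds (0:ℝ)] fun h => h^4 := by
    refine (he (-2)).congr_left fun h => ?_
    rw [show (-2:ℝ)*h = -(2*h) from by ring, show x + -(2*h) = x - 2*h from by ring]
  have e5 : (fun h : ℝ => u (x + h/2) - P (h/2)) =O[nhds (0:ℝ)] fun h => h^4 := by
    refine (he (1/2)).congr_left fun h => ?_
    rw [show (1/2:ℝ)*h = h/2 from by ring]
  have em5 : (fun h : ℝ => u (x - h/2) - P (-(h/2))) =O[nhds (0:ℝ)] fun h => h^4 := by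
    refine (he (-(1/2))).congr_left fun h => ?_
    rw [show (-(1/2):ℝ)*h = -(h/2) from by ring, show x + -(h/2) = x - h/2 from by ring]
  have d1 : (fun h : ℝ => u (x + h) - u x) =O[nhds (0:ℝ)] fun h => h := by
    refine (hd 1).congr_left fun h => ?_
    rw [show (1:ℝ)*h = h from by ring]
  have dm1 : (fun h : ℝ => u (x - h) - u x) =O[nhds (0:ℝ)] fun h => h := by
    refine (hd (-1)).congr_left fun h => ?_
    rw [show (-1:ℝ)*h = -h from by ring, show x + -h = x - h from by ring]
  have d2 : (fun h : ℝ => u (x + 2*h) - u x) =O[nhds (0:ℝ)] fun h => h := hd 2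
  have dm2 : (fun h : ℝ => u (x - 2*h) - u x) =O[nhds (0:ℝ)] fun h => h := by
    refine (hd (-2)).congr_left fun h => ?_
    rw [show (-2:ℝ)*h = -(2*h) from by ring, show x + -(2*h) = x - 2*h from by ring]
  have d5 : (fun h : ℝ => u (x + h/2) - u x) =O[nhds (0:ℝ)] fun h => h := by
    refine (hd (1/2)).congr_left fun h => ?_
    rw [show (1/2:ℝ)*h = h/2 from by ring]
  have dm5 : (fun h : ℝ => u (x - h/2) - u x) =O[nhds (0:ℝ)] fun h => h := by
    refine (hd (-(1/2))).congr_left fun h => ?_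
    rw [show (-(1/2):ℝ)*h = -(h/2) from by ring, show x + -(h/2) = x - h/2 from by ring]
  have hAQ1 : (fun h : ℝ => uL (1/2) x u h - Q1 h) =O[nhds (0:ℝ)] fun h => h^4 := by
    refine ((e1.const_mul_left (3/8)).sub (em1.const_mul_left (1/8))).congr_left fun h => ?_
    simp only [uL, hQ1, hu0]; ring
  have hA01 : (fun h : ℝ => uL (1/2) x u h - u0) =O[nhds (0:ℝ)] fun h => h := by
    refine ((d1.const_mul_left (3/8)).sub (dm1.const_mul_left (1/8))).congr_left fun h => ?_
    simp only [uL, hu0]; ring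
  have hAQ2 : (fun h : ℝ => uR (1/2) x u h - Q2 h) =O[nhds (0:ℝ)] fun h => h^4 := by
    refine ((e1.const_mul_left (3/4)).sub (e2.const_mul_left (1/8))).congr_left fun h => ?_
    simp only [uR, hQ2, hu0]; ring
  have hA02 : (fun h : ℝ => uR (1/2) x u h - u0) =O[nhds (0:ℝ)] fun h => h := by
    refine ((d1.const_mul_left (3/4)).sub (d2.const_mul_left (1/8))).congr_left fun h => ?_
    simp only [uR, hu0]; ring
  have hAQ3 : (fun h : ℝ => uLm (1/2) x u h - Q3 h) =O[nhds (0:ℝ)] fun h => h^4 := by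
    refine ((em1.const_mul_left (3/4)).sub (em2.const_mul_left (1/8))).congr_left fun h => ?_
    simp only [uLm, uL, hQ3]
    rw [show x - h + h = x from by ring, show x - h - h = x - 2*h from by ring]
    simp only [hu0]; ring
  have hA03 : (fun h : ℝ => uLm (1/2) x u h - u0) =O[nhds (0:ℝ)] fun h => h := by
    refine ((dm1.const_mul_left (3/4)).sub (dm2.const_mul_left (1/8))).congr_left fun h => ?_
    simp only [uLm, uL]
    rw [show x - h + h = x from by ring, show x - h - h = x - 2*h from by ring]
    simp only [hu0]; ring
  have hAQ4 : (fun h : ℝ => uRm (1/2) x u h - Q4 h) =O[nhds (0:ℝ)] fun h => h^4 := by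
    refine ((em1.const_mul_left (3/8)).sub (e1.const_mul_left (1/8))).congr_left fun h => ?_
    simp only [uRm, uR, hQ4]
    rw [show x - h + h = x from by ring, show x - h + 2*h = x + h from by ring]
    simp only [hu0]; ring
  have hA04 : (fun h : ℝ => uRm (1/2) x u h - u0) =O[nhds (0:ℝ)] fun h => h := by
    refine ((dm1.const_mul_left (3/8)).sub (d1.const_mul_left (1/8))).congr_left fun h => ?_
    simp only [uRm, uR]
    rw [show x - h + h = x from by ring, show x - h + 2*h = x + h from by ring]
    simp only [hu0]; ring
  have hAQ5 : (fun h : ℝ => u (x + h/2) - Q5 h) =O[nhds (0:ℝ)] fun h => h^4 := by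
    refine e5.congr_left fun h => ?_
    simp only [hQ5]
  have hA05 : (fun h : ℝ => u (x + h/2) - u0) =O[nhds (0:ℝ)] fun h => h := by
    refine d5.congr_left fun h => ?_
    simp only [hu0]
  have hAQ6 : (fun h : ℝ => u (x - h/2) - Q6 h) =O[nhds (0:ℝ)] fun h => h^4 := by
    refine em5.congr_left fun h => ?_
    simp only [hQ6]
  have hA06 : (fun h : ℝ => u (x - h/2) - u0) =O[nhds (0:ℝ)] fun h => h := by
    refine dm5.congr_left fun h => ?_
    simp only [hu0]
  have E1 : (fun h : ℝ => f (uL (1/2) x u h) - (f u0 + g1*(Q1 h - u0) + g2*(Q1 h - u0)^2/2 + g3*(Q1 h - u0)^3/6)) =O[nhds (0:ℝ)] fun h => h^4 :=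
    key_comp f u0 g1 g2 g3 hB (fun h => uL (1/2) x u h) Q1 hAQ1 hA01
  have E2 : (fun h : ℝ => f (uR (1/2) x u h) - (f u0 + g1*(Q2 h - u0) + g2*(Q2 h - u0)^2/2 + g3*(Q2 h - u0)^3/6)) =O[nhds (0:ℝ)] fun h => h^4 :=
    key_comp f u0 g1 g2 g3 hB (fun h => uR (1/2) x u h) Q2 hAQ2 hA02
  have E3 : (fun h : ℝ => f (uLm (1/2) x u h) - (f u0 + g1*(Q3 h - u0) + g2*(Q3 h - u0)^2/2 + g3*(Q3 h - u0)^3/6)) =O[nhds (0:ℝ)] fun h => h^4 :=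
    key_comp f u0 g1 g2 g3 hB (fun h => uLm (1/2) x u h) Q3 hAQ3 hA03
  have E4 : (fun h : ℝ => f (uRm (1/2) x u h) - (f u0 + g1*(Q4 h - u0) + g2*(Q4 h - u0)^2/2 + g3*(Q4 h - u0)^3/6)) =O[nhds (0:ℝ)] fun h => h^4 :=
    key_comp f u0 g1 g2 g3 hB (fun h => uRm (1/2) x u h) Q4 hAQ4 hA04
  have E5 : (fun h : ℝ => f (u (x + h/2)) - (f u0 + g1*(Q5 h - u0) + g2*(Q5 h - u0)^2/2 + g3*(Q5 h - u0)^3/6)) =O[nhds (0:ℝ)] fun h => h^4 :=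
    key_comp f u0 g1 g2 g3 hB (fun h => u (x + h/2)) Q5 hAQ5 hA05
  have E6 : (fun h : ℝ => f (u (x - h/2)) - (f u0 + g1*(Q6 h - u0) + g2*(Q6 h - u0)^2/2 + g3*(Q6 h - u0)^3/6)) =O[nhds (0:ℝ)] fun h => h^4 :=
    key_comp f u0 g1 g2 g3 hB (fun h => u (x - h/2)) Q6 hAQ6 hA06
  have hB4 : (fun h : ℝ => ((f u0 + g1*(Q1 h - u0) + g2*(Q1 h - u0)^2/2 + g3*(Q1 h - u0)^3/6) + (f u0 + g1*(Q2 h - u0) + g2*(Q2 h - u0)^2/2 + g3*(Q2 h - u0)^3/6)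
      - (f u0 + g1*(Q3 h - u0) + g2*(Q3 h - u0)^2/2 + g3*(Q3 h - u0)^3/6) - (f u0 + g1*(Q4 h - u0) + g2*(Q4 h - u0)^2/2 + g3*(Q4 h - u0)^3/6))
      - 2*((f u0 + g1*(Q5 h - u0) + g2*(Q5 h - u0)^2/2 + g3*(Q5 h - u0)^3/6) - (f u0 + g1*(Q6 h - u0) + g2*(Q6 h - u0)^2/2 + g3*(Q6 h - u0)^3/6))) =O[nhds (0:ℝ)] fun h => h^4 := by
    have hpoly : (fun h : ℝ => ((f u0 + g1*(Q1 h - u0) + g2*(Q1 h - u0)^2/2 + g3*(Q1 h - u0)^3/6) + (f u0 + g1*(Q2 h - u0) + g2*(Q2 h - u0)^2/2 + g3*(Q2 h - u0)^3/6)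
        - (f u0 + g1*(Q3 h - u0) + g2*(Q3 h - u0)^2/2 + g3*(Q3 h - u0)^3/6) - (f u0 + g1*(Q4 h - u0) + g2*(Q4 h - u0)^2/2 + g3*(Q4 h - u0)^3/6))
        - 2*((f u0 + g1*(Q5 h - u0) + g2*(Q5 h - u0)^2/2 + g3*(Q5 h - u0)^3/6) - (f u0 + g1*(Q6 h - u0) + g2*(Q6 h - u0)^2/2 + g3*(Q6 h - u0)^3/6)))
        = fun h : ℝ => h^4 * ((1/256)*u1*u3^2*g3*h^3 + (1/6144)*u3^3*g3*h^5) := by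
      funext h
      simp only [hQ1, hQ2, hQ3, hQ4, hQ5, hQ6, hP]
      ring
    rw [hpoly]
    have hW : Continuous fun h : ℝ => (1/256)*u1*u3^2*g3*h^3 + (1/6144)*u3^3*g3*h^5 :=
      (continuous_const.mul (continuous_pow 3)).add (continuous_const.mul (continuous_pow 5))
    simpa using (isBigO_refl (fun h : ℝ => h^4) (nhds 0)).mul ((hW.tendsto 0).isBigO_one ℝ)
  have total := ((((E1.add E2).sub E3).sub E4).sub ((E5.sub E6).const_mul_left 2)).add hB4
  exact total.congr_left fun h => by ring

theorem quick_third_order_finite_volume (f u : ℝ → ℝ) (hf : ContDiff ℝ 4 f)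
    (hu : ContDiff ℝ 4 u) (x : ℝ) :
    (fun h : ℝ =>
        (1 / (2 * h)) * (f (uL (1 / 2) x u h) + f (uR (1 / 2) x u h)
          - f (uLm (1 / 2) x u h) - f (uRm (1 / 2) x u h))
        - (1 / h) * (∫ ξ in (x - h / 2)..(x + h / 2), deriv (f ∘ u) ξ))
      =O[nhdsWithin 0 (Set.Ioi 0)] fun h : ℝ => h ^ 3 := by
  have hud : Differentiable ℝ u := hu.differentiable (by norm_num)
  have hA : (fun t : ℝ => u (x + t) - (u x + deriv u x * t + iteratedDeriv 2 u x * t^2/2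
      + iteratedDeriv 3 u x * t^3/6)) =O[nhds (0:ℝ)] fun t => t^4 := taylor4_isBigO hu x
  have hB : (fun s : ℝ => f (u x + s) - (f (u x) + deriv f (u x) * s
      + iteratedDeriv 2 f (u x) * s^2/2 + iteratedDeriv 3 f (u x) * s^3/6))
      =O[nhds (0:ℝ)] fun s => s^4 := taylor4_isBigO hf (u x)
  have hN := hN_aux f u x (u x) (deriv u x) (iteratedDeriv 2 u x) (iteratedDeriv 3 u x)
      (deriv f (u x)) (iteratedDeriv 2 f (u x)) (iteratedDeriv 3 f (u x)) rfl hud hA hB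
  have hg : ContDiff ℝ 4 (f ∘ u) := hf.comp hu
  have hFTC : ∀ h : ℝ, (∫ ξ in (x - h/2)..(x + h/2), deriv (f ∘ u) ξ)
      = f (u (x + h/2)) - f (u (x - h/2)) := by
    intro h
    rw [intervalIntegral.integral_deriv_eq_sub
      (fun ξ _ => (hg.differentiable (by norm_num)).differentiableAt)
      ((hg.continuous_deriv (by norm_num)).intervalIntegrable _ _)]
    simp [Function.comp]
  obtain ⟨C, hC⟩ := hN.bound
  rw [Asymptotics.isBigO_iff]
  refine ⟨|C|, ?_⟩
  filter_upwards [hC.filter_mono nhdsWithin_le_nhds, self_mem_nhdsWithin]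
    with h hb (hpos : h ∈ Set.Ioi 0)
  have hhp : (0:ℝ) < h := hpos
  have hne : (2:ℝ)*h ≠ 0 := by positivity
  have hmain : (1 / (2 * h)) * (f (uL (1 / 2) x u h) + f (uR (1 / 2) x u h)
      - f (uLm (1 / 2) x u h) - f (uRm (1 / 2) x u h))
      - (1 / h) * (∫ ξ in (x - h / 2)..(x + h / 2), deriv (f ∘ u) ξ)
      = ((f (uL (1/2) x u h) + f (uR (1/2) x u h)
        - f (uLm (1/2) x u h) - f (uRm (1/2) x u h))
      - 2*(f (u (x + h/2)) - f (u (x - h/2)))) / (2*h) := by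
    rw [hFTC h]
    field_simp
  rw [hmain, Real.norm_eq_abs, abs_div]
  rw [Real.norm_eq_abs, Real.norm_eq_abs] at hb
  rw [Real.norm_eq_abs, abs_of_pos (by positivity : (0:ℝ) < 2*h), abs_of_pos (pow_pos hhp 3)]
  rw [abs_of_pos (pow_pos hhp 4)] at hb
  rw [div_le_iff₀ (by positivity : (0:ℝ) < 2*h)]
  nlinarith [le_abs_self C, abs_nonneg ((f (uL (1/2) x u h) + f (uR (1/2) x u h)
    - f (uLm (1/2) x u h) - f (uRm (1/2) x u h))
    - 2*(f (u (x + h/2)) - f (u (x - h/2)))), pow_pos hhp 3, pow_pos hhp 4,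
    abs_nonneg C]
end

section
/- Let g : ℝ → ℝ be of class C⁴, fix x ∈ ℝ and κ ∈ ℝ. Apply the κ-interpolation formulas directly to g (flux reconstruction). Then (1/(2h))·( (uL(g,h) + uR(g,h)) − (uL⁻(g,h) + uR⁻(g,h)) ) = g'(x) + ((3κ−1)/12)·g'''(x)·h² + O(h³) as h → 0⁺; in particular, for κ = 1/3 the reconstructed flux balance is a third-order approximation of the pointwise derivative g'(x) (third-order accuracy of the QUICKEST scheme with direct flux reconstruction). -/
open Asymptotics Filter Set MeasureTheory

/-- Mean value step: if `f 0 = 0` and `f' = O(t^n)` then `f = O(t^(n+1))`. -/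
lemma mvt_step {f f' : ℝ → ℝ} {n : ℕ} (hf : ∀ t, HasDerivAt f (f' t) t) (h0 : f 0 = 0)
    (hd : f' =O[nhds 0] fun t => t ^ n) : f =O[nhds 0] fun t => t ^ (n + 1) := by
  obtain ⟨c, hc⟩ := hd.bound
  rw [Metric.eventually_nhds_iff] at hc
  obtain ⟨δ, hδ, hb⟩ := hc
  rw [isBigO_iff]
  refine ⟨|c|, Metric.eventually_nhds_iff.2 ⟨δ, hδ, fun {t} ht => ?_⟩⟩
  simp only [Real.dist_eq, sub_zero] at ht hb
  have key : ∀ s : ℝ, |s| ≤ |t| → ‖f' s‖ ≤ |c| * |t| ^ n := by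
    intro s hs
    have h1 := hb (lt_of_le_of_lt hs ht)
    have h2 : c * ‖s ^ n‖ ≤ |c| * ‖s ^ n‖ :=
      mul_le_mul_of_nonneg_right (le_abs_self c) (norm_nonneg _)
    refine (h1.trans h2).trans ?_
    have h3 : ‖s ^ n‖ = |s| ^ n := by rw [Real.norm_eq_abs, abs_pow]
    rw [h3]
    exact mul_le_mul_of_nonneg_left (pow_le_pow_left₀ (abs_nonneg s) hs n) (abs_nonneg c)
  rcases le_total 0 t with htpos | htneg
  · have hmvt := norm_image_sub_le_of_norm_deriv_le_segment' (a := 0) (b := t)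
      (f := f) (f' := f') (C := |c| * |t| ^ n)
      (fun s _ => (hf s).hasDerivWithinAt)
      (fun s hs => key s (by rw [abs_of_nonneg hs.1, abs_of_nonneg htpos]; exact hs.2.le))
      t ⟨htpos, le_refl t⟩
    rw [h0, sub_zero] at hmvt
    calc ‖f t‖ ≤ |c| * |t| ^ n * (t - 0) := hmvt
      _ = |c| * ‖t ^ (n + 1)‖ := by
          rw [Real.norm_eq_abs, abs_pow, abs_of_nonneg htpos, sub_zero, pow_succ]; ring
  · have hmvt := norm_image_sub_le_of_norm_deriv_le_segment' (a := t) (b := 0)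
      (f := f) (f' := f') (C := |c| * |t| ^ n)
      (fun s _ => (hf s).hasDerivWithinAt)
      (fun s hs => key s (by
        rw [abs_of_nonpos (le_of_lt hs.2), abs_of_nonpos htneg]; linarith [hs.1]))
      0 ⟨htneg, le_refl 0⟩
    rw [h0] at hmvt
    have : ‖f t‖ = ‖(0 : ℝ) - f t‖ := by rw [zero_sub, norm_neg]
    rw [this]
    calc ‖(0:ℝ) - f t‖ ≤ |c| * |t| ^ n * (0 - t) := hmvt
      _ = |c| * ‖t ^ (n + 1)‖ := by
          rw [Real.norm_eq_abs, abs_pow, abs_of_nonpos htneg, pow_succ]; ring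

noncomputable def rem (g : ℝ → ℝ) (x t : ℝ) : ℝ :=
  g (x + t) - g x - iteratedDeriv 1 g x * t - iteratedDeriv 2 g x / 2 * t ^ 2
    - iteratedDeriv 3 g x / 6 * t ^ 3

lemma rem_isBigO {g : ℝ → ℝ} (hg : ContDiff ℝ 4 g) (x : ℝ) :
    (fun t => rem g x t) =O[nhds 0] fun t => t ^ 4 := by
  have hdiff : ∀ j : ℕ, j < 4 → ∀ t : ℝ,
      HasDerivAt (iteratedDeriv j g) (iteratedDeriv (j + 1) g t) t := by
    intro j hj t
    have h1 : Differentiable ℝ (iteratedDeriv j g) :=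
      hg.differentiable_iteratedDeriv j (by exact_mod_cast hj)
    rw [iteratedDeriv_succ]
    exact (h1 t).hasDerivAt
  have hshift : ∀ j : ℕ, j < 4 → ∀ t : ℝ,
      HasDerivAt (fun s => iteratedDeriv j g (x + s)) (iteratedDeriv (j + 1) g (x + t)) t := by
    intro j hj t
    have := (hdiff j hj (x + t)).comp t ((hasDerivAt_id t).const_add x)
    simp only [mul_one] at this
    exact this
  have h3 : ∀ t : ℝ, HasDerivAt (fun t => iteratedDeriv 3 g (x + t) - iteratedDeriv 3 g x)
      (iteratedDeriv 4 g (x + t)) t := fun t => (hshift 3 (by norm_num) t).sub_const _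
  have h2 : ∀ t : ℝ, HasDerivAt
      (fun t => iteratedDeriv 2 g (x + t) - iteratedDeriv 2 g x - iteratedDeriv 3 g x * t)
      (iteratedDeriv 3 g (x + t) - iteratedDeriv 3 g x) t := by
    intro t
    have h := ((hshift 2 (by norm_num) t).sub_const (iteratedDeriv 2 g x)).sub
      ((hasDerivAt_id t).const_mul (iteratedDeriv 3 g x))
    exact h.congr_deriv (by simp only [Nat.reduceAdd, mul_one])
  have h1 : ∀ t : ℝ, HasDerivAt
      (fun t => iteratedDeriv 1 g (x + t) - iteratedDeriv 1 g x - iteratedDeriv 2 g x * t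
        - iteratedDeriv 3 g x / 2 * t ^ 2)
      (iteratedDeriv 2 g (x + t) - iteratedDeriv 2 g x - iteratedDeriv 3 g x * t) t := by
    intro t
    have h := (((hshift 1 (by norm_num) t).sub_const (iteratedDeriv 1 g x)).sub
      ((hasDerivAt_id t).const_mul (iteratedDeriv 2 g x))).sub
      ((hasDerivAt_pow 2 t).const_mul (iteratedDeriv 3 g x / 2))
    refine h.congr_deriv ?_
    simp only [Nat.reduceAdd, Nat.cast_ofNat, Nat.reduceSub, pow_one, mul_one]
    ring
  have h0 : ∀ t : ℝ, HasDerivAt (fun t => rem g x t)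
      (iteratedDeriv 1 g (x + t) - iteratedDeriv 1 g x - iteratedDeriv 2 g x * t
        - iteratedDeriv 3 g x / 2 * t ^ 2) t := by
    intro t
    have hg0 : ∀ s : ℝ, HasDerivAt (fun s => g (x + s)) (iteratedDeriv 1 g (x + s)) s := by
      intro s
      have := hshift 0 (by norm_num) s
      simpa [iteratedDeriv_zero] using this
    have h := ((((hg0 t).sub_const (g x)).sub
      ((hasDerivAt_id t).const_mul (iteratedDeriv 1 g x))).sub
      ((hasDerivAt_pow 2 t).const_mul (iteratedDeriv 2 g x / 2))).sub
      ((hasDerivAt_pow 3 t).const_mul (iteratedDeriv 3 g x / 6))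
    have heq : (fun t => rem g x t) = fun t : ℝ =>
        g (x + t) - g x - iteratedDeriv 1 g x * t - iteratedDeriv 2 g x / 2 * t ^ 2
          - iteratedDeriv 3 g x / 6 * t ^ 3 := by
      funext t; simp [rem]
    rw [heq]
    refine h.congr_deriv ?_
    simp only [Nat.reduceAdd, Nat.cast_ofNat, Nat.reduceSub, pow_one, mul_one]
    ring
  -- now chain
  have hcont : Continuous (iteratedDeriv 4 g) := hg.continuous_iteratedDeriv 4 (by norm_num)
  have hO4 : (fun t : ℝ => iteratedDeriv 4 g (x + t)) =O[nhds 0] fun t : ℝ => t ^ 0 := by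
    have htend : Tendsto (fun t : ℝ => iteratedDeriv 4 g (x + t)) (nhds 0)
        (nhds (iteratedDeriv 4 g x)) := by
      have : Tendsto (fun t : ℝ => x + t) (nhds 0) (nhds x) := by
        simpa using (continuous_add_left x).tendsto (0 : ℝ)
      exact hcont.continuousAt.tendsto.comp this
    simpa [pow_zero] using htend.isBigO_one ℝ
  have hr3 := mvt_step h3 (by simp) hO4
  have hr2 := mvt_step h2 (by simp) hr3
  have hr1 := mvt_step h1 (by simp) hr2
  have hr0 := mvt_step h0 (by simp [rem]) hr1
  exact hr0



theorem quickest_flux_reconstruction (g : ℝ → ℝ) (hg : ContDiff ℝ 4 g) (x κ : ℝ) :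
    ((fun h : ℝ =>
        (1 / (2 * h)) * ((uL κ x g h + uR κ x g h) - (uLm κ x g h + uRm κ x g h))
        - (deriv g x + ((3 * κ - 1) / 12) * iteratedDeriv 3 g x * h ^ 2))
      =O[nhdsWithin 0 (Set.Ioi 0)] fun h : ℝ => h ^ 3) ∧
    (κ = 1 / 3 →
      (fun h : ℝ =>
        (1 / (2 * h)) * ((uL κ x g h + uR κ x g h) - (uLm κ x g h + uRm κ x g h))
        - deriv g x)
      =O[nhdsWithin 0 (Set.Ioi 0)] fun h : ℝ => h ^ 3) := by
  have hr := rem_isBigO hg x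
  -- composed big-O estimates
  have hk : ∀ k : ℝ, (fun h : ℝ => rem g x (k * h)) =O[nhds 0] fun h : ℝ => h ^ 4 := by
    intro k
    have ht : Tendsto (fun h : ℝ => k * h) (nhds 0) (nhds 0) := by
      simpa using (continuous_mul_left k).tendsto (0 : ℝ)
    have h1 := hr.comp_tendsto ht
    have h2 : (fun h : ℝ => (k * h) ^ 4) =O[nhds 0] fun h : ℝ => h ^ 4 := by
      simpa [mul_pow] using
        (isBigO_refl (fun h : ℝ => h ^ 4) (nhds 0)).const_mul_left (k ^ 4)
    exact (by simpa [Function.comp_def] using h1 : (fun h : ℝ => rem g x (k * h)) =O[nhds 0]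
      fun h : ℝ => (k * h) ^ 4).trans h2
  -- the numerator estimate
  set T : ℝ → ℝ := fun h =>
    (uL κ x g h + uR κ x g h) - (uLm κ x g h + uRm κ x g h)
      - (2 * h * iteratedDeriv 1 g x + ((3 * κ - 1) / 6) * iteratedDeriv 3 g x * h ^ 3) with hT
  have key : ∀ h : ℝ, T h
      = (rem g x (1 * h) - rem g x ((-1) * h)) - ((1 - κ) / 4) *
        (rem g x (2 * h) - 2 * rem g x (1 * h) + 2 * rem g x ((-1) * h)
          - rem g x ((-2) * h)) := by
    intro h
    simp only [hT, uL, uR, uLm, uRm, rem]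
    ring_nf
  have hTO : T =O[nhds 0] fun h : ℝ => h ^ 4 := by
    have := (((hk 1).sub (hk (-1))).sub
      ((((((hk 2).sub ((hk 1).const_mul_left 2)).add
        ((hk (-1)).const_mul_left 2)).sub (hk (-2))).const_mul_left ((1 - κ) / 4))))
    refine this.congr' (Eventually.of_forall fun h => ?_) (Eventually.of_forall fun _ => rfl)
    rw [key h]
  -- pass to the one-sided filter and divide by 2h
  obtain ⟨c, hc⟩ := (hTO.mono nhdsWithin_le_nhds
    (l := nhdsWithin (0:ℝ) (Set.Ioi 0))).bound
  have main : (fun h : ℝ =>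
        (1 / (2 * h)) * ((uL κ x g h + uR κ x g h) - (uLm κ x g h + uRm κ x g h))
        - (deriv g x + ((3 * κ - 1) / 12) * iteratedDeriv 3 g x * h ^ 2))
      =O[nhdsWithin 0 (Set.Ioi 0)] fun h : ℝ => h ^ 3 := by
    rw [isBigO_iff]
    refine ⟨c / 2, ?_⟩
    filter_upwards [hc, self_mem_nhdsWithin] with h hch (hpos : 0 < h)
    have hne : h ≠ 0 := ne_of_gt hpos
    have hTid : (1 / (2 * h)) * ((uL κ x g h + uR κ x g h) - (uLm κ x g h + uRm κ x g h))
        - (deriv g x + ((3 * κ - 1) / 12) * iteratedDeriv 3 g x * h ^ 2)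
        = T h / (2 * h) := by
      rw [← iteratedDeriv_one]
      simp only [hT]
      field_simp
      ring
    rw [hTid]
    simp only [Real.norm_eq_abs] at hch ⊢
    rw [abs_div, abs_of_pos (by positivity : (0:ℝ) < 2 * h),
      abs_of_pos (pow_pos hpos 3)]
    rw [abs_of_pos (pow_pos hpos 4)] at hch
    rw [div_le_iff₀ (by positivity : (0:ℝ) < 2 * h)]
    calc |T h| ≤ c * h ^ 4 := hch
      _ = c / 2 * h ^ 3 * (2 * h) := by ring
  refine ⟨main, fun hκ => ?_⟩
  subst hκ
  have h0 : ((3 * (1/3 : ℝ) - 1) / 12) = 0 := by norm_num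
  simpa [h0] using main
end
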